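/- Let a ∈ ℝ^n and d ∈ ℝ^n be vectors such that ∑_{ℓ} a_ℓ = 1, a_ℓ > 0 for all ℓ, and d_ℓ > -a_ℓ for all ℓ. Then ∑_{ℓ=1}^n (d_ℓ - a_ℓ·ln(1 + d_ℓ/a_ℓ)) ≥ ‖d‖₁ - ln(1 + ‖d‖₁), where ‖d‖₁ = ∑_ℓ |d_ℓ|. -/

import Mathlib

open Real Finset

lemma key_log (u : ℝ) (hu0 : 0 ≤ u) (hu1 : u < 1) :
    2 * u ≤ Real.log (1 + u) - Real.log (1 - u) := by
  set f : ℝ → ℝ := fun x => Real.log (1 + x) - Real.log (1 - x) - 2 * x with hf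
  have hmono : MonotoneOn f (Set.Ico 0 1) := by
    have hderiv : ∀ x : ℝ, 0 ≤ x → x < 1 →
        HasDerivAt f (1/(1+x) - (1-x)⁻¹ * (-1) - 2) x := by
      intro x h0 h1
      have h1x : (1:ℝ) + x ≠ 0 := by linarith
      have h2x : (1:ℝ) - x ≠ 0 := by linarith
      have hA : HasDerivAt (fun x : ℝ => Real.log (1+x)) (1/(1+x)) x := by
        have := (Real.hasDerivAt_log h1x).comp x ((hasDerivAt_id x).const_add 1)
        simpa [Function.comp_def] using this
      have hB : HasDerivAt (fun x : ℝ => Real.log (1-x)) ((1-x)⁻¹ * (-1)) x := by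
        have := (Real.hasDerivAt_log h2x).comp x ((hasDerivAt_id x).const_sub 1)
        simpa [Function.comp_def] using this
      have hC : HasDerivAt (fun x : ℝ => 2 * x) 2 x := by
        simpa using (hasDerivAt_id x).const_mul 2
      exact (hA.sub hB).sub hC
    apply monotoneOn_of_deriv_nonneg (convex_Ico 0 1)
    · intro x hx
      obtain ⟨h0, h1⟩ := hx
      rcases eq_or_lt_of_le h0 with rfl | h0'
      · -- continuity at 0 via HasDerivAt at 0
        exact ((hderiv 0 le_rfl one_pos).continuousAt).continuousWithinAt
      · exact ((hderiv x h0 h1).continuousAt).continuousWithinAt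
    · intro x hx
      rw [interior_Ico] at hx
      exact ((hderiv x hx.1.le hx.2).differentiableAt).differentiableWithinAt
    · intro x hx
      rw [interior_Ico] at hx
      obtain ⟨h0, h1⟩ := hx
      rw [(hderiv x h0.le h1).deriv]
      have hx1 : (0:ℝ) < 1 + x := by linarith
      have hx2 : (0:ℝ) < 1 - x := by linarith
      have key : (2:ℝ) ≤ 1/(1+x) + 1/(1-x) := by
        rw [div_add_div _ _ hx1.ne' hx2.ne', le_div_iff₀ (by positivity)]
        nlinarith
      have : (1-x)⁻¹ * (-1) = -(1/(1-x)) := by field_simp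
      rw [this]
      linarith
  have h0 : f 0 = 0 := by simp [hf]
  have := hmono (Set.mem_Ico.2 ⟨le_refl 0, one_pos⟩) (Set.mem_Ico.2 ⟨hu0, hu1⟩) hu0
  rw [h0] at this
  simp only [hf] at this
  linarith

lemma pointwise (a d : ℝ) (ha : 0 < a) (hd : -a < d) :
    |d| - a * Real.log (1 + |d| / a) ≤ d - a * Real.log (1 + d / a) := by
  rcases le_or_gt 0 d with h | h
  · rw [abs_of_nonneg h]
  · rw [abs_of_neg h]
    set u : ℝ := -d / a with hu
    have hu0 : 0 ≤ u := div_nonneg (by linarith) ha.le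
    have hu1 : u < 1 := by rw [hu, div_lt_one ha]; linarith
    have hk := key_log u hu0 hu1
    have e1 : 1 + -d / a = 1 + u := by rw [hu]
    have e2 : 1 + d / a = 1 - u := by rw [hu]; ring
    rw [e1, e2]
    have hda : -d = a * u := by rw [hu]; field_simp
    nlinarith [mul_le_mul_of_nonneg_left hk ha.le]

theorem sum_sub_log_ge_l1_sub_log {n : ℕ} (a d : Fin n → ℝ)
    (hsum : ∑ ℓ, a ℓ = 1) (ha : ∀ ℓ, 0 < a ℓ) (hd : ∀ ℓ, -a ℓ < d ℓ) :
    ∑ ℓ, (d ℓ - a ℓ * Real.log (1 + d ℓ / a ℓ)) ≥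
      (∑ ℓ, |d ℓ|) - Real.log (1 + ∑ ℓ, |d ℓ|) := by
  have step1 : ∑ ℓ, (|d ℓ| - a ℓ * Real.log (1 + |d ℓ| / a ℓ)) ≤
      ∑ ℓ, (d ℓ - a ℓ * Real.log (1 + d ℓ / a ℓ)) :=
    Finset.sum_le_sum fun ℓ _ => pointwise (a ℓ) (d ℓ) (ha ℓ) (hd ℓ)
  have jensen : ∑ ℓ, a ℓ * Real.log (1 + |d ℓ| / a ℓ) ≤ Real.log (1 + ∑ ℓ, |d ℓ|) := by
    have hc : ConcaveOn ℝ (Set.Ioi 0) Real.log := strictConcaveOn_log_Ioi.concaveOn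
    have hJ := hc.le_map_sum (t := Finset.univ) (w := a) (p := fun ℓ => 1 + |d ℓ| / a ℓ)
      (fun i _ => (ha i).le) hsum
      (fun i _ => by
        have h1 := ha i; have h2 := abs_nonneg (d i)
        simp only [Set.mem_Ioi]; positivity)
    simp only [smul_eq_mul] at hJ
    have hsum2 : ∑ i, a i * (1 + |d i| / a i) = 1 + ∑ ℓ, |d ℓ| := by
      have hcg : ∀ i ∈ Finset.univ, a i * (1 + |d i| / a i) = a i + |d i| := fun i _ => by
        rw [mul_add, mul_one, mul_div_cancel₀ _ (ha i).ne']
      rw [Finset.sum_congr rfl hcg, Finset.sum_add_distrib, hsum]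
    rw [hsum2] at hJ
    exact hJ
  have expand : ∑ ℓ, (|d ℓ| - a ℓ * Real.log (1 + |d ℓ| / a ℓ)) =
      (∑ ℓ, |d ℓ|) - ∑ ℓ, a ℓ * Real.log (1 + |d ℓ| / a ℓ) := by
    rw [Finset.sum_sub_distrib]
  linarith [step1, jensen, expand.symm.le, expand.le]
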